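/- Let A be a dimensionally nilpotent Lie triple non-nil algebra with adapted basis {e_0,…,e_n}, with e_0 (pseudo-)idempotent. Then for each 1 ≤ k ≤ n, writing e_0 e_k = λ_k e_k + (terms in e_{k+1},…,e_n), the eigenvalue λ_k belongs to {0, 1/2, 1}. -/

import Mathlib

/-- In a dimensionally nilpotent Lie triple non-nil algebra with adapted basis and
e_0 (pseudo-)idempotent, writing e_0e_k = λ_k e_k + (terms in e_{k+1},…,e_n) and
e_ie_k ∈ span{e_{k+1},…,e_n}, the eigenvalue λ_k lies in {0, 1/2, 1} for 1 ≤ k ≤ n. -/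
theorem eigenvalues_of_Le0 {K A : Type*} [Field K]
    [NonUnitalNonAssocCommRing A] [Module K A] [SMulCommClass K A A] [IsScalarTower K A A]
    (h2 : (2 : K) ≠ 0) (h3 : (3 : K) ≠ 0)
    (n : ℕ) (hn : 1 ≤ n)
    (e : Module.Basis (Fin (n + 1)) K A)
    (hLT : ∀ x y : A, 2 • (x * (x * (x * y))) + y * (x * (x * x)) = 3 • (x * (y * (x * x))))
    (d : Module.End K A) (hd : ∀ x y : A, d (x * y) = d x * y + x * d y)
    (hadapt : ∀ i : Fin (n + 1), ∀ hi : (i : ℕ) < n,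
      d (e i) = e ⟨(i : ℕ) + 1, Nat.succ_lt_succ hi⟩)
    (hdtop : d (e ⟨n, Nat.lt_succ_self n⟩) = 0)
    (hidem : e 0 * e 0 = e 0 ∨ ∃ t : A, t ≠ 0 ∧ e 0 * e 0 = e 0 + t ∧
      e 0 * t = (2 : K)⁻¹ • t ∧ t * t = 0)
    (lam : Fin (n + 1) → K)
    (htri : ∀ k : Fin (n + 1), 1 ≤ (k : ℕ) →
      e 0 * e k - lam k • e k ∈ Submodule.span K (e '' {i | (k : ℕ) < (i : ℕ)}))
    (htri2 : ∀ i k : Fin (n + 1), 1 ≤ (i : ℕ) → (i : ℕ) ≤ (k : ℕ) →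
      e i * e k ∈ Submodule.span K (e '' {j | (k : ℕ) < (j : ℕ)})) :
    ∀ k : Fin (n + 1), 1 ≤ (k : ℕ) →
      lam k = 0 ∨ lam k = (2 : K)⁻¹ ∨ lam k = 1 := by
  classical
  set S : ℕ → Submodule K A :=
    fun m => Submodule.span K (e '' {i : Fin (n + 1) | m < (i : ℕ)}) with hS
  have hSmono : ∀ {m m' : ℕ}, m ≤ m' → S m' ≤ S m := by
    intro m m' h
    exact Submodule.span_mono (Set.image_mono fun i hi => lt_of_le_of_lt h hi)
  have hmemS : ∀ (m : ℕ) (i : Fin (n + 1)), m < (i : ℕ) → e i ∈ S m :=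
    fun m i hi => Submodule.subset_span ⟨i, hi, rfl⟩
  have htri' : ∀ k : Fin (n + 1), 1 ≤ (k : ℕ) → e 0 * e k - lam k • e k ∈ S (k : ℕ) := htri
  have htri2' : ∀ i k : Fin (n + 1), 1 ≤ (i : ℕ) → (i : ℕ) ≤ (k : ℕ) →
      e i * e k ∈ S (k : ℕ) := htri2
  -- multiplication by e 0 preserves S m
  have hL1 : ∀ (m : ℕ) (v : A), v ∈ S m → e 0 * v ∈ S m := by
    intro m v hv
    induction hv using Submodule.span_induction with
    | mem x hx =>
      obtain ⟨i, hi, rfl⟩ := hx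
      have hi' : m < (i : ℕ) := hi
      have hi1 : 1 ≤ (i : ℕ) := by omega
      have h := htri' i hi1
      have heq : e 0 * e i = (e 0 * e i - lam i • e i) + lam i • e i := by abel
      rw [heq]
      exact add_mem (hSmono (by omega) h) (Submodule.smul_mem _ _ (hmemS m i hi'))
    | zero => rw [mul_zero]; exact zero_mem _
    | add x y _ _ hx hy => rw [mul_add]; exact add_mem hx hy
    | smul c x _ hx => rw [mul_smul_comm]; exact Submodule.smul_mem _ _ hx
  -- multiplication by e j (j ≥ 1) maps S 0 into S j
  have hL2 : ∀ (j : Fin (n + 1)), 1 ≤ (j : ℕ) → ∀ v, v ∈ S 0 → e j * v ∈ S (j : ℕ) := by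
    intro j hj v hv
    induction hv using Submodule.span_induction with
    | mem x hx =>
      obtain ⟨i, hi, rfl⟩ := hx
      have hi' : 0 < (i : ℕ) := hi
      rcases le_or_gt (i : ℕ) (j : ℕ) with h | h
      · rw [mul_comm]; exact htri2' i j (by omega) h
      · exact hSmono (le_of_lt h) (htri2' j i hj (le_of_lt h))
    | zero => rw [mul_zero]; exact zero_mem _
    | add x y _ _ hx hy => rw [mul_add]; exact add_mem hx hy
    | smul c x _ hx => rw [mul_smul_comm]; exact Submodule.smul_mem _ _ hx
  -- S 0 is closed under multiplication
  have hL3 : ∀ v, v ∈ S 0 → ∀ w, w ∈ S 0 → v * w ∈ S 0 := by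
    intro v hv
    induction hv using Submodule.span_induction with
    | mem x hx =>
      obtain ⟨i, hi, rfl⟩ := hx
      have hi' : 0 < (i : ℕ) := hi
      intro w hw
      exact hSmono (Nat.zero_le _) (hL2 i (by omega) w hw)
    | zero => intro w hw; rw [zero_mul]; exact zero_mem _
    | add x y _ _ hx hy => intro w hw; rw [add_mul]; exact add_mem (hx w hw) (hy w hw)
    | smul c x _ hx => intro w hw; rw [smul_mul_assoc]; exact Submodule.smul_mem _ _ (hx w hw)
  -- coordinates ≤ m vanish on S m
  have hcoord : ∀ (m : ℕ) (j : Fin (n + 1)), (j : ℕ) ≤ m → ∀ v, v ∈ S m →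
      e.repr v j = 0 := by
    intro m j hj v hv
    induction hv using Submodule.span_induction with
    | mem x hx =>
      obtain ⟨i, hi, rfl⟩ := hx
      have hi' : m < (i : ℕ) := hi
      have hne : i ≠ j := by intro h; subst h; omega
      rw [e.repr_self]
      exact Finsupp.single_eq_of_ne hne.symm
    | zero => simp
    | add x y _ _ hx hy => rw [map_add, Finsupp.add_apply, hx, hy, add_zero]
    | smul c x _ hx => rw [map_smul, Finsupp.smul_apply, hx, smul_zero]
  -- elements with vanishing 0-coordinate lie in S 0
  have hmem0 : ∀ v : A, e.repr v 0 = 0 → v ∈ S 0 := by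
    intro v h0
    have hv := e.sum_repr v
    rw [← hv]
    refine Submodule.sum_mem _ fun i _ => ?_
    by_cases hi : i = 0
    · subst hi; rw [h0, zero_smul]; exact zero_mem _
    · refine Submodule.smul_mem _ _ (hmemS 0 i ?_)
      have : (i : ℕ) ≠ 0 := fun h => hi (Fin.ext (by simp [h]))
      omega
  intro k hk
  -- the key iteration step
  have hstep : ∀ (v : A) (c : K), v - c • e k ∈ S (k : ℕ) →
      e 0 * v - (lam k * c) • e k ∈ S (k : ℕ) := by
    intro v c hv
    have h1 : e 0 * v - (lam k * c) • e k
        = c • (e 0 * e k - lam k • e k) + e 0 * (v - c • e k) := by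
      rw [mul_sub, mul_smul_comm, smul_sub, smul_smul, mul_comm c (lam k)]
      abel
    rw [h1]
    exact add_mem (Submodule.smul_mem _ _ (htri' k hk)) (hL1 _ _ hv)
  have hv0 : e k - (1 : K) • e k ∈ S (k : ℕ) := by
    rw [one_smul, sub_self]; exact zero_mem _
  have hv1 := hstep (e k) 1 hv0
  have hv2 := hstep (e 0 * e k) (lam k * 1) hv1
  have hv3 := hstep (e 0 * (e 0 * e k)) (lam k * (lam k * 1)) hv2
  -- coordinate extraction
  have hphi : ∀ (v : A) (c : K), v - c • e k ∈ S (k : ℕ) → e.repr v k = c := by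
    intro v c hv
    have h := hcoord (k : ℕ) k le_rfl _ hv
    rw [map_sub, Finsupp.sub_apply, map_smul, Finsupp.smul_apply, e.repr_self,
      Finsupp.single_eq_same, smul_eq_mul, mul_one, sub_eq_zero] at h
    exact h
  -- the final algebraic step from 2λ³ + λ = 3λ²
  have hfinish : (2 : K) * (lam k * (lam k * (lam k * 1))) + lam k * 1
      = (3 : K) * (lam k * (lam k * 1)) → lam k = 0 ∨ lam k = (2 : K)⁻¹ ∨ lam k = 1 := by
    intro hl
    have hfact : lam k * ((2 * lam k - 1) * (lam k - 1)) = 0 := by linear_combination hl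
    rcases mul_eq_zero.mp hfact with h | h
    · exact Or.inl h
    rcases mul_eq_zero.mp h with h | h
    · have : (2 : K) * lam k = 1 := by linear_combination h
      exact Or.inr (Or.inl (eq_inv_of_mul_eq_one_right this))
    · exact Or.inr (Or.inr (by linear_combination h))
  rcases hidem with hxx | ⟨t, ht0, hxx, h0t, htt⟩
  · -- idempotent case
    have hid := hLT (e 0) (e k)
    simp only [hxx] at hid
    rw [mul_comm (e k) (e 0)] at hid
    have := congrArg (fun v => e.repr v k) hid
    simp only [map_add, map_nsmul, Finsupp.add_apply, Finsupp.smul_apply, smul_eq_mul] at this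
    rw [hphi _ _ hv3, hphi _ _ hv1, hphi _ _ hv2] at this
    apply hfinish
    push_cast at this
    linear_combination this
  · -- pseudo-idempotent case: first show the e 0-coordinate of t vanishes
    set c0 : K := e.repr t 0 with hc0def
    set t' : A := t - c0 • e 0 with ht'def
    have hts : t = c0 • e 0 + t' := by rw [ht'def]; abel
    have ht'0 : e.repr t' 0 = 0 := by
      rw [ht'def, map_sub, Finsupp.sub_apply, map_smul, Finsupp.smul_apply, e.repr_self,
        Finsupp.single_eq_same, smul_eq_mul, mul_one, ← hc0def, sub_self]
    have ht'S : t' ∈ S 0 := hmem0 _ ht'0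
    have hzero : ∀ v, v ∈ S 0 → e.repr v 0 = 0 := fun v hv => hcoord 0 0 le_rfl v hv
    have hr00 : e.repr (e 0 * e 0) 0 = 1 + c0 := by
      rw [hxx, map_add, Finsupp.add_apply, e.repr_self, Finsupp.single_eq_same, ← hc0def]
    -- Eq1 : c0 * (1 + c0) = 2⁻¹ * c0
    have hmul1 : e 0 * t = c0 • (e 0 * e 0) + e 0 * t' := by
      conv_lhs => rw [hts]
      rw [mul_add, mul_smul_comm]
    have heq1 : c0 * (1 + c0) = (2 : K)⁻¹ * c0 := by
      have hl : e.repr (e 0 * t) 0 = c0 * (1 + c0) := by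
        rw [hmul1, map_add, Finsupp.add_apply, map_smul, Finsupp.smul_apply, hr00,
          hzero _ (hL1 0 t' ht'S), add_zero, smul_eq_mul]
      have hr : e.repr (e 0 * t) 0 = (2 : K)⁻¹ * c0 := by
        rw [h0t, map_smul, Finsupp.smul_apply, ← hc0def, smul_eq_mul]
      rw [← hl, hr]
    -- Eq2 : c0 * c0 * (1 + c0) = 0
    have hmul2 : t * t = (c0 * c0) • (e 0 * e 0) + (c0 • (e 0 * t') + (c0 • (t' * e 0) + t' * t')) := by
      conv_lhs => rw [hts]
      simp only [add_mul, mul_add, smul_mul_assoc, mul_smul_comm, smul_smul, smul_add]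
      abel
    have heq2 : c0 * c0 * (1 + c0) = 0 := by
      have h1 : e.repr (t * t) 0 = c0 * c0 * (1 + c0) := by
        rw [hmul2, map_add, Finsupp.add_apply, map_add, Finsupp.add_apply,
          map_add, Finsupp.add_apply, map_smul, Finsupp.smul_apply, hr00,
          map_smul, Finsupp.smul_apply, hzero _ (hL1 0 t' ht'S),
          map_smul, Finsupp.smul_apply]
        rw [mul_comm t' (e 0), hzero _ (hL1 0 t' ht'S), hzero _ (hL3 t' ht'S t' ht'S)]
        simp [smul_eq_mul]
      rw [← h1, htt]; simp
    have hc0sq : (2 : K)⁻¹ * (c0 * c0) = 0 := by linear_combination heq2 - c0 * heq1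
    have hc0 : c0 = 0 := by
      have := (mul_eq_zero.mp hc0sq).resolve_left (inv_ne_zero h2)
      exact mul_self_eq_zero.mp this
    have htS : t ∈ S 0 := hmem0 t hc0
    have hekt : e k * t ∈ S (k : ℕ) := hL2 k hk t htS
    -- membership facts for the three terms of the identity
    have hB : e k * (e 0 * (e 0 + t)) - (lam k * 1) • e k ∈ S (k : ℕ) := by
      have h1 : e 0 * (e 0 + t) = e 0 + t + (2 : K)⁻¹ • t := by
        rw [mul_add, hxx, h0t]
      rw [h1, mul_add, mul_add, mul_smul_comm]
      have h2 : e k * e 0 - (lam k * 1) • e k ∈ S (k : ℕ) := by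
        rw [mul_comm, mul_one]; exact htri' k hk
      have h3 := add_mem (add_mem h2 hekt) (Submodule.smul_mem _ ((2 : K)⁻¹) hekt)
      have heq : e k * e 0 + e k * t + (2 : K)⁻¹ • (e k * t) - (lam k * 1) • e k
          = e k * e 0 - (lam k * 1) • e k + e k * t + (2 : K)⁻¹ • (e k * t) := by abel
      rw [heq]
      exact h3
    have hC : e 0 * (e k * (e 0 + t)) - (lam k * (lam k * 1)) • e k ∈ S (k : ℕ) := by
      have h1 : e k * (e 0 + t) = e 0 * e k + e k * t := by
        rw [mul_add, mul_comm (e k) (e 0)]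
      rw [h1, mul_add]
      have h3 := add_mem hv2 (hL1 _ _ hekt)
      have heq : e 0 * (e 0 * e k) + e 0 * (e k * t) - (lam k * (lam k * 1)) • e k
          = e 0 * (e 0 * e k) - (lam k * (lam k * 1)) • e k + e 0 * (e k * t) := by abel
      rw [heq]
      exact h3
    have hid := hLT (e 0) (e k)
    simp only [hxx] at hid
    have := congrArg (fun v => e.repr v k) hid
    simp only [map_add, map_nsmul, Finsupp.add_apply, Finsupp.smul_apply, smul_eq_mul] at this
    rw [hphi _ _ hv3, hphi _ _ hB, hphi _ _ hC] at this
    apply hfinish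
    push_cast at this
    linear_combination this
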